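/- Let P = N(0,1) and Q = N(μ,1) for μ > 0. For any event S (measurable subset of ℝ), Q(S) − e^ε·P(S) ≤ Φ(−ε/μ + μ/2) − e^ε·Φ(−ε/μ − μ/2), with equality when S = {x : log(dQ/dP)(x) ≥ ε} = {x : x ≥ ε/μ + μ/2}. -/

import Mathlib

open MeasureTheory ProbabilityTheory

/-- The standard normal CDF `Φ`. -/
noncomputable def Phi (x : ℝ) : ℝ :=
  (Real.sqrt (2 * Real.pi))⁻¹ * ∫ t in Set.Iic x, Real.exp (-t ^ 2 / 2)

lemma gauss_toReal (m : ℝ) (S : Set ℝ) :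
    (gaussianReal m 1 S).toReal = ∫ x in S, gaussianPDFReal m 1 x := by
  rw [gaussianReal_apply_eq_integral m one_ne_zero S, ENNReal.toReal_ofReal]
  exact integral_nonneg fun x => gaussianPDFReal_nonneg m 1 x

lemma pdf01 (x : ℝ) :
    gaussianPDFReal 0 1 x = (Real.sqrt (2 * Real.pi))⁻¹ * Real.exp (-x ^ 2 / 2) := by
  simp [gaussianPDFReal]

lemma Phi_eq (a : ℝ) : Phi a = (gaussianReal 0 1 (Set.Iic a)).toReal := by
  rw [gauss_toReal, Phi]
  rw [← MeasureTheory.integral_const_mul]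
  exact setIntegral_congr_fun measurableSet_Iic fun x _ => (pdf01 x).symm

lemma gauss_Ici (m c : ℝ) :
    (gaussianReal m 1 (Set.Ici c)).toReal = Phi (m - c) := by
  have h1 : gaussianReal m 1 (Set.Ici c) = gaussianReal 0 1 (Set.Ici (c - m)) := by
    have := gaussianReal_map_add_const (μ := 0) (v := 1) m
    rw [zero_add] at this
    rw [← this, Measure.map_apply (by fun_prop) measurableSet_Ici]
    congr 1
    ext x
    simp only [Set.mem_preimage, Set.mem_Ici]
    constructor <;> intro h <;> linarith
  have h2 : gaussianReal 0 1 (Set.Ici (c - m)) = gaussianReal 0 1 (Set.Iic (m - c)) := by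
    have hmap := gaussianReal_map_const_mul (μ := 0) (v := 1) (-1)
    have h11 : (NNReal.mk ((-1:ℝ)^2) (sq_nonneg _) * 1 : NNReal) = 1 := by ext; simp
    rw [h11, mul_zero] at hmap
    conv_lhs => rw [← hmap]
    rw [Measure.map_apply (by fun_prop) measurableSet_Ici]
    congr 1
    ext x
    simp only [Set.mem_preimage, Set.mem_Ici, Set.mem_Iic]
    constructor <;> intro h <;> linarith
  rw [h1, h2, Phi_eq]

lemma sign_iff (μ ε : ℝ) (hμ : 0 < μ) (x : ℝ) :
    Real.exp ε * gaussianPDFReal 0 1 x ≤ gaussianPDFReal μ 1 x ↔ ε / μ + μ / 2 ≤ x := by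
  have hC : (0:ℝ) < (Real.sqrt (2 * Real.pi * 1))⁻¹ := by positivity
  simp only [gaussianPDFReal, NNReal.coe_one]
  rw [mul_left_comm, mul_le_mul_iff_right₀ hC, ← Real.exp_add, Real.exp_le_exp]
  rw [show ε / μ + μ / 2 ≤ x ↔ ε / μ ≤ x - μ / 2 from ⟨fun h => by linarith, fun h => by linarith⟩,
    div_le_iff₀ hμ]
  constructor <;> intro h <;> nlinarith

/-- For `P = N(0,1)` and `Q = N(μ,1)` with `μ > 0`, and any measurable event `S`,
`Q(S) − e^ε·P(S) ≤ Φ(−ε/μ + μ/2) − e^ε·Φ(−ε/μ − μ/2)`, with equality when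
`S = {x : x ≥ ε/μ + μ/2}` (the likelihood-ratio event `{log(dQ/dP) ≥ ε}`). -/
theorem gaussian_dp_tradeoff (μ ε : ℝ) (hμ : 0 < μ) (hε : 0 < ε) :
    (∀ S : Set ℝ, MeasurableSet S →
      (gaussianReal μ 1 S).toReal - Real.exp ε * (gaussianReal 0 1 S).toReal
        ≤ Phi (-ε / μ + μ / 2) - Real.exp ε * Phi (-ε / μ - μ / 2)) ∧
    ((gaussianReal μ 1 {x : ℝ | ε / μ + μ / 2 ≤ x}).toReal
        - Real.exp ε * (gaussianReal 0 1 {x : ℝ | ε / μ + μ / 2 ≤ x}).toReal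
      = Phi (-ε / μ + μ / 2) - Real.exp ε * Phi (-ε / μ - μ / 2)) := by
  set c : ℝ := ε / μ + μ / 2 with hc
  have hset : {x : ℝ | ε / μ + μ / 2 ≤ x} = Set.Ici c := rfl
  -- values on the threshold set
  have hQT : (gaussianReal μ 1 (Set.Ici c)).toReal = Phi (-ε / μ + μ / 2) := by
    rw [gauss_Ici]; congr 1; rw [hc]; ring
  have hPT : (gaussianReal 0 1 (Set.Ici c)).toReal = Phi (-ε / μ - μ / 2) := by
    rw [gauss_Ici]; congr 1; rw [hc]; ring
  have heq : (gaussianReal μ 1 {x : ℝ | ε / μ + μ / 2 ≤ x}).toReal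
        - Real.exp ε * (gaussianReal 0 1 {x : ℝ | ε / μ + μ / 2 ≤ x}).toReal
      = Phi (-ε / μ + μ / 2) - Real.exp ε * Phi (-ε / μ - μ / 2) := by
    rw [hset, hQT, hPT]
  refine ⟨fun S hS => ?_, heq⟩
  rw [← heq, hset]
  -- reduce to integrals of f = qpdf - e^ε * ppdf
  set f : ℝ → ℝ := fun x => gaussianPDFReal μ 1 x - Real.exp ε * gaussianPDFReal 0 1 x with hf
  have hfi : Integrable f := by
    exact (integrable_gaussianPDFReal μ 1).sub ((integrable_gaussianPDFReal 0 1).const_mul _)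
  have key : ∀ A : Set ℝ,
      ∫ x in A, f x = (gaussianReal μ 1 A).toReal - Real.exp ε * (gaussianReal 0 1 A).toReal := by
    intro A
    rw [gauss_toReal, gauss_toReal, ← MeasureTheory.integral_const_mul,
      ← integral_sub ((integrable_gaussianPDFReal μ 1).integrableOn)
        (((integrable_gaussianPDFReal 0 1).const_mul _).integrableOn)]
  rw [← key, ← key]
  have hT : MeasurableSet (Set.Ici c) := measurableSet_Ici
  calc ∫ x in S, f x
      = (∫ x in S ∩ Set.Ici c, f x) + ∫ x in S \ Set.Ici c, f x :=
        (integral_inter_add_diff hT hfi.integrableOn).symm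
    _ ≤ (∫ x in S ∩ Set.Ici c, f x) + 0 := by
        gcongr
        refine setIntegral_nonpos (hS.diff hT) fun x hx => ?_
        have hxc : ¬ c ≤ x := by simpa [Set.mem_Ici] using hx.2
        have := (sign_iff μ ε hμ x).not.mpr hxc
        rw [hf]
        simp only [sub_nonpos]
        push_neg at this
        exact this.le
    _ = ∫ x in S ∩ Set.Ici c, f x := by ring
    _ ≤ ∫ x in Set.Ici c, f x := by
        refine setIntegral_mono_set hfi.integrableOn ?_
          (HasSubset.Subset.eventuallyLE Set.inter_subset_right)
        refine (ae_restrict_iff' hT).mpr (ae_of_all _ fun x hx => ?_)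
        show (0 : ℝ → ℝ) x ≤ f x
        have : Real.exp ε * gaussianPDFReal 0 1 x ≤ gaussianPDFReal μ 1 x :=
          (sign_iff μ ε hμ x).mpr hx
        simp only [hf, Pi.zero_apply, sub_nonneg]
        exact this
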